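/- For every integer N ≥ 3 and every λ ∈ [0,1], every eigenvalue of the operator Y := W_C^λ − λ·W_C lies in the set {0, 1−λ, 2(1−λ), 3(1−λ)}, where W_C is the cluster-state witness operator and W_C^λ its modified (unsharp) version. -/
import Mathlib


open Matrix Polynomial
open scoped ComplexOrder

noncomputable section

/-- The space of operators on `N` qubits: complex `2^N × 2^N` matrices, with the
`N`-fold tensor-product structure made explicit by indexing rows and columns by
functions `Fin N → Fin 2`. -/
abbrev QM (N : ℕ) := Matrix (Fin N → Fin 2) (Fin N → Fin 2) ℂ

/-- The Pauli matrix σ_x. -/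
def sigx : Matrix (Fin 2) (Fin 2) ℂ := !![0, 1; 1, 0]

/-- The Pauli matrix σ_z. -/
def sigz : Matrix (Fin 2) (Fin 2) ℂ := !![1, 0; 0, -1]

/-- The tensor (Kronecker) product `f 0 ⊗ f 1 ⊗ ⋯ ⊗ f (N-1)` of single-qubit operators. -/
def tensorAll (N : ℕ) (f : Fin N → Matrix (Fin 2) (Fin 2) ℂ) : QM N :=
  Matrix.of fun v w => ∏ i, f i (v i) (w i)

/-- The single-qubit operator `M` acting on qubit `m`, tensored with the identity
on all other qubits. -/
def site (N : ℕ) (m : Fin N) (M : Matrix (Fin 2) (Fin 2) ℂ) : QM N :=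
  tensorAll N (fun i => if i = m then M else 1)

/-- Cluster-state stabilizer generator (0-based index `m : Fin N`): σ_x on qubit `m`
and σ_z on its nearest neighbour(s); it represents the 1-based generator `S_{m+1}`. -/
def clS (N : ℕ) (m : Fin N) : QM N :=
  tensorAll N (fun i =>
    if i = m then sigx
    else if i.val + 1 = m.val ∨ m.val + 1 = i.val then sigz else 1)

/-- Factor `(I + S_{m+1})/2` of the cluster witness. -/
def clFactor (N : ℕ) (m : Fin N) : QM N := (1/2 : ℂ) • ((1 : QM N) + clS N m)

/-- Factor of the modified cluster witness: `(I + λ S_N)/2` for the last generator and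
`(I + S_{m+1})/2` otherwise. -/
def clFactorMod (N : ℕ) (lam : ℝ) (m : Fin N) : QM N :=
  if m.val = N - 1 then (1/2 : ℂ) • ((1 : QM N) + (lam : ℂ) • clS N m)
  else (1/2 : ℂ) • ((1 : QM N) + clS N m)

/-- Product of the cluster-witness factors over the 1-based indices `m+1` of parity
`r` (`r = 1` gives the even 1-based indices, `r = 0` the odd ones); the factors
pairwise commute, so the list ordering is immaterial. -/
def clProd (N : ℕ) (r : ℕ) : QM N :=
  (((List.finRange N).filter (fun m => m.val % 2 = r)).map (clFactor N)).prod

/-- The analogous parity product for the modified cluster witness; the factor carrying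
`λ` (the one for `S_N`) lies in the even product when `N` is even and in the odd one
when `N` is odd. -/
def clProdMod (N : ℕ) (lam : ℝ) (r : ℕ) : QM N :=
  (((List.finRange N).filter (fun m => m.val % 2 = r)).map (clFactorMod N lam)).prod

/-- The cluster-state genuine-multipartite-entanglement witness
`W_C = 3 I − 2 [∏_{even m}(I+S_m)/2 + ∏_{odd m}(I+S_m)/2]`. -/
def clWitness (N : ℕ) : QM N :=
  (3 : ℂ) • (1 : QM N) - (2 : ℂ) • (clProd N 1 + clProd N 0)

/-- The modified (unsharp) cluster witness `W_C^λ`, obtained from `W_C` by replacing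
the factor `(I+S_N)/2` by `(I+λS_N)/2`. -/
def clWitnessMod (N : ℕ) (lam : ℝ) : QM N :=
  (3 : ℂ) • (1 : QM N) - (2 : ℂ) • (clProdMod N lam 1 + clProdMod N lam 0)

/-! ### Auxiliary lemmas -/

section Aux

lemma key_poly {A : Type*} [Ring A] (P Q : A) (hP : P * P = P) (hQ : Q * Q = Q)
    (h : P * Q = Q * P) :
    ((3:A) - 2*P - Q) * ((3:A) - 2*P - Q - 1) * ((3:A) - 2*P - Q - 2) * ((3:A) - 2*P - Q - 3) = 0 := by
  have hQP : Q * P = P * Q := h.symm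
  have hQPQ : Q * (P * Q) = P * Q := by rw [← mul_assoc, hQP, mul_assoc, hQ]
  have hPQP : (P * Q) * P = P * Q := by rw [mul_assoc, hQP, ← mul_assoc, hP]
  have hPPQ : P * (P * Q) = P * Q := by rw [← mul_assoc, hP]
  have hPQQ : (P * Q) * Q = P * Q := by rw [mul_assoc, hQ]
  have hPQPQ : (P * Q) * (P * Q) = P * Q := by rw [mul_assoc, hQPQ, hPPQ]
  set X : A := (3:A) - 2*P - Q with hX
  have e1 : X * (X - 3) = -(2*P) - 2*Q + 4*(P*Q) := by
    calc X * (X - 3)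
        = -(6*P) - 3*Q + 4*(P*P) + 2*(P*Q) + 2*(Q*P) + Q*Q := by
          rw [hX]; noncomm_ring
      _ = -(2*P) - 2*Q + 4*(P*Q) := by rw [hP, hQ, hQP]; noncomm_ring
  have e2 : (X - 1) * (X - 2) = X * (X - 3) + 2 := by
    simp only [sub_mul, mul_sub, one_mul, mul_one]
    rw [show (3:A) = 2 + 1 by norm_num, mul_add, mul_one, mul_two]
    abel
  have hA : (P + Q - 2*(P*Q)) * (P + Q - 2*(P*Q)) = P + Q - 2*(P*Q) := by
    calc (P + Q - 2*(P*Q)) * (P + Q - 2*(P*Q))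
        = P*P + P*Q - 2*(P*(P*Q)) + Q*P + Q*Q - 2*(Q*(P*Q))
            - 2*((P*Q)*P) - 2*((P*Q)*Q) + 4*((P*Q)*(P*Q)) := by noncomm_ring
      _ = P + Q - 2*(P*Q) := by
          rw [hPPQ, hQPQ, hPQP, hPQQ, hPQPQ, hP, hQ, hQP]; noncomm_ring
  have reorder : X * (X - 1) * (X - 2) * (X - 3) = (X * (X - 3)) * ((X - 1) * (X - 2)) := by
    noncomm_ring
  rw [reorder, e2, e1]
  calc (-(2*P) - 2*Q + 4*(P*Q)) * ((-(2*P) - 2*Q + 4*(P*Q)) + 2)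
      = 4*((P + Q - 2*(P*Q)) * (P + Q - 2*(P*Q))) - 4*(P + Q - 2*(P*Q)) := by noncomm_ring
    _ = 0 := by rw [hA]; noncomm_ring

lemma tensorAll_mul (N : ℕ) (f g : Fin N → Matrix (Fin 2) (Fin 2) ℂ) :
    tensorAll N f * tensorAll N g = tensorAll N (fun i => f i * g i) := by
  ext v w
  have h := Finset.prod_univ_sum (fun _ : Fin N => (Finset.univ : Finset (Fin 2)))
    (fun i j => f i (v i) j * g i j (w i))
  rw [Fintype.piFinset_univ] at h
  simp only [tensorAll, Matrix.mul_apply, Matrix.of_apply, Matrix.mul_apply]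
  rw [h]
  exact Finset.sum_congr rfl fun u _ => (Finset.prod_mul_distrib).symm

lemma tensorAll_one (N : ℕ) : tensorAll N (fun _ => (1 : Matrix (Fin 2) (Fin 2) ℂ)) = 1 := by
  ext v w
  simp only [tensorAll, Matrix.of_apply, Matrix.one_apply]
  by_cases h : v = w
  · subst h; simp
  · rw [if_neg h]
    obtain ⟨i, hi⟩ := Function.ne_iff.mp h
    exact Finset.prod_eq_zero (Finset.mem_univ i) (if_neg hi)

lemma tensorAll_smul_eq (N : ℕ) (f g : Fin N → Matrix (Fin 2) (Fin 2) ℂ) (c : Fin N → ℂ)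
    (h : ∀ i, f i = c i • g i) :
    tensorAll N f = (∏ i, c i) • tensorAll N g := by
  ext v w
  simp only [tensorAll, Matrix.of_apply, Matrix.smul_apply, smul_eq_mul]
  rw [← Finset.prod_mul_distrib]
  exact Finset.prod_congr rfl fun i _ => by rw [h i]; simp

lemma sigx_mul_sigx : sigx * sigx = 1 := by
  ext i j; fin_cases i <;> fin_cases j <;>
    simp [sigx, Matrix.mul_apply, Fin.sum_univ_two, Matrix.one_apply]

lemma sigz_mul_sigz : sigz * sigz = 1 := by
  ext i j; fin_cases i <;> fin_cases j <;>
    simp [sigz, Matrix.mul_apply, Fin.sum_univ_two, Matrix.one_apply]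

lemma sigx_mul_sigz : sigx * sigz = (-1 : ℂ) • (sigz * sigx) := by
  ext i j; fin_cases i <;> fin_cases j <;>
    simp [sigx, sigz, Matrix.mul_apply, Fin.sum_univ_two]

lemma sigz_mul_sigx : sigz * sigx = (-1 : ℂ) • (sigx * sigz) := by
  rw [sigx_mul_sigz]; simp

lemma clS_sq (N : ℕ) (m : Fin N) : clS N m * clS N m = 1 := by
  rw [clS, tensorAll_mul,
    show (fun i : Fin N => _ * _) = fun _ : Fin N => (1 : Matrix (Fin 2) (Fin 2) ℂ) from ?_,
    tensorAll_one]
  funext i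
  split_ifs <;> simp [sigx_mul_sigx, sigz_mul_sigz]

set_option linter.unreachableTactic false in
set_option linter.unusedTactic false in
lemma clS_comm (N : ℕ) (m m' : Fin N) : clS N m * clS N m' = clS N m' * clS N m := by
  rcases eq_or_ne m m' with rfl | hne
  · rfl
  rw [clS, clS, tensorAll_mul, tensorAll_mul]
  by_cases hadj : m.val + 1 = m'.val ∨ m'.val + 1 = m.val
  · have key : ∀ i : Fin N,
        (if i = m then sigx else if i.val + 1 = m.val ∨ m.val + 1 = i.val then sigz else 1) *
          (if i = m' then sigx else if i.val + 1 = m'.val ∨ m'.val + 1 = i.val then sigz else 1)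
        = ((if i = m then (-1:ℂ) else 1) * (if i = m' then (-1:ℂ) else 1)) •
          ((if i = m' then sigx else if i.val + 1 = m'.val ∨ m'.val + 1 = i.val then sigz else 1) *
            (if i = m then sigx else if i.val + 1 = m.val ∨ m.val + 1 = i.val then sigz else 1)) := by
      intro i
      have hne' : m.val ≠ m'.val := fun h => hne (Fin.ext h)
      simp only [Fin.ext_iff]
      split_ifs <;>
        first
          | omega
          | (rw [sigx_mul_sigz]; norm_num)
          | (rw [sigz_mul_sigx]; norm_num)
          | simp
    rw [tensorAll_smul_eq N _ _ _ key]
    rw [Finset.prod_mul_distrib, Finset.prod_ite_eq' Finset.univ m (fun _ => (-1:ℂ)),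
      Finset.prod_ite_eq' Finset.univ m' (fun _ => (-1:ℂ))]
    simp
  · have key : (fun i : Fin N =>
        (if i = m then sigx else if i.val + 1 = m.val ∨ m.val + 1 = i.val then sigz else 1) *
          (if i = m' then sigx else if i.val + 1 = m'.val ∨ m'.val + 1 = i.val then sigz else 1))
        = (fun i : Fin N =>
        (if i = m' then sigx else if i.val + 1 = m'.val ∨ m'.val + 1 = i.val then sigz else 1) *
          (if i = m then sigx else if i.val + 1 = m.val ∨ m.val + 1 = i.val then sigz else 1)) := by
      funext i
      have hne' : m.val ≠ m'.val := fun h => hne (Fin.ext h)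
      simp only [Fin.ext_iff]
      split_ifs <;> first | rfl | omega | simp
    rw [key]

lemma gfac_comm (N : ℕ) (c d : ℂ) (A B : QM N) (h : A * B = B * A) :
    ((1/2:ℂ) • (1 + c • A)) * ((1/2:ℂ) • (1 + d • B))
      = ((1/2:ℂ) • (1 + d • B)) * ((1/2:ℂ) • (1 + c • A)) := by
  simp only [smul_mul_assoc, mul_smul_comm, mul_add, add_mul, one_mul, mul_one, smul_add,
    smul_smul, h]
  module

lemma gfac_idem (N : ℕ) (A : QM N) (h : A * A = 1) :
    ((1/2:ℂ) • (1 + A)) * ((1/2:ℂ) • (1 + A)) = (1/2:ℂ) • (1 + A) := by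
  simp only [smul_mul_assoc, mul_smul_comm, mul_add, add_mul, one_mul, mul_one, smul_add,
    smul_smul, h]
  module

lemma clFactor_eq (N : ℕ) (m : Fin N) :
    clFactor N m = (1/2:ℂ) • ((1 : QM N) + (1:ℂ) • clS N m) := by
  simp [clFactor]

lemma clFactorMod_eq (N : ℕ) (lam : ℝ) (m : Fin N) :
    clFactorMod N lam m
      = (1/2:ℂ) • ((1 : QM N) + (if m.val = N - 1 then (lam:ℂ) else 1) • clS N m) := by
  rw [clFactorMod]; split_ifs <;> simp

lemma clFactor_comm (N : ℕ) (m m' : Fin N) :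
    clFactor N m * clFactor N m' = clFactor N m' * clFactor N m := by
  rw [clFactor_eq, clFactor_eq]
  exact gfac_comm N _ _ _ _ (clS_comm N m m')

lemma clFactorMod_comm (N : ℕ) (lam : ℝ) (m m' : Fin N) :
    clFactorMod N lam m * clFactorMod N lam m' = clFactorMod N lam m' * clFactorMod N lam m := by
  rw [clFactorMod_eq, clFactorMod_eq]
  exact gfac_comm N _ _ _ _ (clS_comm N m m')

lemma clFactor_idem (N : ℕ) (m : Fin N) :
    clFactor N m * clFactor N m = clFactor N m := by
  rw [clFactor]
  exact gfac_idem N _ (clS_sq N m)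

lemma prod_idem {M : Type*} [Monoid M] (l : List M) (h1 : ∀ x ∈ l, x * x = x)
    (h2 : ∀ x ∈ l, ∀ y ∈ l, x * y = y * x) : l.prod * l.prod = l.prod := by
  induction l with
  | nil => simp
  | cons a t ih =>
    simp only [List.prod_cons]
    have hco : a * t.prod = t.prod * a :=
      Commute.list_prod_right t a (fun x hx => h2 a (by simp) x (by simp [hx]))
    calc a * t.prod * (a * t.prod) = a * ((t.prod * a) * t.prod) := by
          rw [mul_assoc, mul_assoc]
      _ = (a * a) * (t.prod * t.prod) := by rw [← hco]; simp only [mul_assoc]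
      _ = a * t.prod := by
          rw [h1 a (by simp), ih (fun x hx => h1 x (by simp [hx]))
            (fun x hx y hy => h2 x (by simp [hx]) y (by simp [hy]))]

lemma prod_comm_prod {M : Type*} [Monoid M] (l l' : List M)
    (h : ∀ x ∈ l, ∀ y ∈ l', x * y = y * x) : l.prod * l'.prod = l'.prod * l.prod :=
  (Commute.list_prod_right l' l.prod (fun y hy =>
    (Commute.list_prod_left l y (fun x hx => h x hx y hy)))).eq

lemma pairwise_commute_map {α M : Type*} [Monoid M] (l : List α) (f : α → M)
    (h : ∀ a b, Commute (f a) (f b)) : (l.map f).Pairwise Commute := by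
  induction l with
  | nil => simp
  | cons a t ih =>
    simp only [List.map_cons, List.pairwise_cons]
    exact ⟨fun b hb => by obtain ⟨x, -, rfl⟩ := List.mem_map.mp hb; exact h a x, ih⟩

lemma prod_map_extract {α M : Type*} [DecidableEq α] [Monoid M] (l : List α) (f : α → M)
    (hcomm : ∀ a b, Commute (f a) (f b)) (a : α) (ha : a ∈ l) :
    (l.map f).prod = f a * ((l.erase a).map f).prod := by
  rw [((List.perm_cons_erase ha).map f).prod_eq' (pairwise_commute_map l f hcomm),
    List.map_cons, List.prod_cons]

end Aux

section Decomp

variable (N : ℕ) (lam : ℝ)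

lemma clProd_idem (r : ℕ) : clProd N r * clProd N r = clProd N r := by
  apply prod_idem
  · intro x hx
    obtain ⟨m, -, rfl⟩ := List.mem_map.mp hx
    exact clFactor_idem N m
  · intro x hx y hy
    obtain ⟨m, -, rfl⟩ := List.mem_map.mp hx
    obtain ⟨m', -, rfl⟩ := List.mem_map.mp hy
    exact clFactor_comm N m m'

lemma clProdMod_other (r : ℕ) (h : (N - 1) % 2 ≠ r) : clProdMod N lam r = clProd N r := by
  rw [clProdMod, clProd]
  congr 1
  apply List.map_congr_left
  intro m hm
  have hm2 : m.val % 2 = r := by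
    have := (List.mem_filter.mp hm).2
    simpa using this
  have : m.val ≠ N - 1 := fun hv => h (by rw [← hv]; exact hm2)
  rw [clFactorMod, if_neg this, clFactor]

lemma decomp (hN : 1 ≤ N) :
    ∃ Qr : QM N, Qr * Qr = Qr ∧
      (∀ r, clProd N r * Qr = Qr * clProd N r) ∧
      clProdMod N lam ((N - 1) % 2)
        = (lam:ℂ) • clProd N ((N - 1) % 2) + (((1:ℂ) - (lam:ℂ))/2) • Qr := by
  have hlt : N - 1 < N := by omega
  have hmem : (⟨N - 1, hlt⟩ : Fin N)
      ∈ (List.finRange N).filter (fun m : Fin N => m.val % 2 = (N - 1) % 2) := by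
    rw [List.mem_filter]
    exact ⟨List.mem_finRange _, by simp⟩
  have hnodup : ((List.finRange N).filter
      (fun m : Fin N => m.val % 2 = (N - 1) % 2)).Nodup := (List.nodup_finRange N).filter _
  set E : List (Fin N) := ((List.finRange N).filter
      (fun m : Fin N => m.val % 2 = (N - 1) % 2)).erase ⟨N - 1, hlt⟩ with hE
  have herase : ∀ a ∈ E, a.val ≠ N - 1 := by
    intro a ha hv
    exact ((List.Nodup.mem_erase_iff hnodup).mp ha).1 (Fin.ext hv)
  have hmapE : E.map (clFactorMod N lam) = E.map (clFactor N) := by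
    apply List.map_congr_left
    intro a ha
    rw [clFactorMod, if_neg (herase a ha), clFactor]
  refine ⟨(E.map (clFactor N)).prod, ?_, ?_, ?_⟩
  · apply prod_idem
    · intro x hx
      obtain ⟨m, -, rfl⟩ := List.mem_map.mp hx
      exact clFactor_idem N m
    · intro x hx y hy
      obtain ⟨m, -, rfl⟩ := List.mem_map.mp hx
      obtain ⟨m', -, rfl⟩ := List.mem_map.mp hy
      exact clFactor_comm N m m'
  · intro r
    apply prod_comm_prod
    intro x hx y hy
    obtain ⟨m, -, rfl⟩ := List.mem_map.mp hx
    obtain ⟨m', -, rfl⟩ := List.mem_map.mp hy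
    exact clFactor_comm N m m'
  · rw [clProdMod,
      prod_map_extract _ (clFactorMod N lam) (fun a b => clFactorMod_comm N lam a b) _ hmem,
      clProd, prod_map_extract _ (clFactor N) (fun a b => clFactor_comm N a b) _ hmem,
      ← hE, hmapE, clFactorMod, if_pos (by simp), clFactor]
    set R := (E.map (clFactor N)).prod
    set S := clS N (⟨N - 1, hlt⟩ : Fin N)
    have expand : (1/2:ℂ) • ((1:QM N) + (lam:ℂ) • S)
        = (lam:ℂ) • ((1/2:ℂ) • ((1:QM N) + S)) + (((1:ℂ) - (lam:ℂ))/2) • 1 := by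
      module
    rw [expand, add_mul]
    simp only [smul_mul_assoc, one_mul]

end Decomp

lemma main_repr (N : ℕ) (hN : 3 ≤ N) (lam : ℝ) :
    ∃ P Q : QM N, P * P = P ∧ Q * Q = Q ∧ P * Q = Q * P ∧
      clWitnessMod N lam - (lam:ℂ) • clWitness N
        = ((1:ℂ) - (lam:ℂ)) • ((3:ℂ) • (1:QM N) - (2:ℂ) • P - Q) := by
  obtain ⟨Q, hQQ, hQcomm, hMod⟩ := decomp N lam (by omega)
  rcases Nat.mod_two_eq_zero_or_one (N - 1) with h0 | h1
  · refine ⟨clProd N 1, Q, clProd_idem N 1, hQQ, hQcomm 1, ?_⟩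
    have hA : clProdMod N lam 1 = clProd N 1 := clProdMod_other N lam 1 (by omega)
    rw [h0] at hMod
    rw [clWitness, clWitnessMod, hA, hMod]
    module
  · refine ⟨clProd N 0, Q, clProd_idem N 0, hQQ, hQcomm 0, ?_⟩
    have hA : clProdMod N lam 0 = clProd N 0 := clProdMod_other N lam 0 (by omega)
    rw [h1] at hMod
    rw [clWitness, clWitnessMod, hA, hMod]
    module

lemma smul_one_numeral (N : ℕ) (c : ℕ) [c.AtLeastTwo] :
    ((OfNat.ofNat c : ℂ)) • (1 : QM N) = (OfNat.ofNat c : QM N) := by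
  rw [← Algebra.algebraMap_eq_smul_one, map_ofNat]

/-- For every integer `N ≥ 3` and every `λ ∈ [0,1]`, every eigenvalue
of the operator `Y := W_C^λ − λ·W_C` lies in the set `{0, 1−λ, 2(1−λ), 3(1−λ)}`, where
`W_C` is the cluster-state witness operator and `W_C^λ` its modified (unsharp)
version. -/
theorem cluster_modifiedWitness_sub_smul_witness_spectrum
    (N : ℕ) (hN : 3 ≤ N) (lam : ℝ) (hlam : lam ∈ Set.Icc (0 : ℝ) 1) :
    ∀ μ ∈ spectrum ℂ (clWitnessMod N lam - (lam : ℂ) • clWitness N),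
      μ = 0 ∨ μ = 1 - (lam : ℂ) ∨ μ = 2 * (1 - (lam : ℂ)) ∨ μ = 3 * (1 - (lam : ℂ)) := by
  intro mu hmu
  obtain ⟨P, Q, hP, hQ, hPQ, hrep⟩ := main_repr N hN lam
  have c2 : ((2:ℂ)) • (1 : QM N) = (2 : QM N) := smul_one_numeral N 2
  have c3 : ((3:ℂ)) • (1 : QM N) = (3 : QM N) := smul_one_numeral N 3
  have f1 : (3:ℂ) • (1:QM N) - (2:ℂ) • P - Q - (1:ℂ) • (1:QM N)
      = (3:QM N) - 2*P - Q - 1 := by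
    rw [← c3, ← c2, smul_mul_assoc, one_mul, one_smul]
  have f2 : (3:ℂ) • (1:QM N) - (2:ℂ) • P - Q - (2:ℂ) • (1:QM N)
      = (3:QM N) - 2*P - Q - 2 := by
    rw [← c3, ← c2, smul_mul_assoc, one_mul]
  have f3 : (3:ℂ) • (1:QM N) - (2:ℂ) • P - Q - (3:ℂ) • (1:QM N)
      = (3:QM N) - 2*P - Q - 3 := by
    rw [← c3, ← c2, smul_mul_assoc, one_mul]
  have f0 : (3:ℂ) • (1:QM N) - (2:ℂ) • P - Q = (3:QM N) - 2*P - Q := by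
    rw [← c3, ← c2, smul_mul_assoc, one_mul]
  have hzero' : ((3:ℂ) • (1:QM N) - (2:ℂ) • P - Q)
      * ((3:ℂ) • (1:QM N) - (2:ℂ) • P - Q - (1:ℂ) • (1:QM N))
      * ((3:ℂ) • (1:QM N) - (2:ℂ) • P - Q - (2:ℂ) • (1:QM N))
      * ((3:ℂ) • (1:QM N) - (2:ℂ) • P - Q - (3:ℂ) • (1:QM N)) = 0 := by
    rw [f1, f2, f3, f0]
    exact key_poly P Q hP hQ hPQ
  set a : ℂ := (1:ℂ) - (lam:ℂ) with ha
  set b : ℂ := 2 * a with hb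
  set c : ℂ := 3 * a with hc
  set p : ℂ[X] := X * (X - C a) * (X - C b) * (X - C c) with hp
  have haev : (aeval (clWitnessMod N lam - (lam:ℂ) • clWitness N)) p = 0 := by
    rw [hp, hrep]
    simp only [_root_.map_mul, map_sub, aeval_X, aeval_C, Algebra.algebraMap_eq_smul_one]
    have h1 : a • ((3:ℂ) • (1:QM N) - (2:ℂ) • P - Q) - a • (1:QM N)
        = a • ((3:ℂ) • (1:QM N) - (2:ℂ) • P - Q - (1:ℂ) • (1:QM N)) := by
      module
    have h2 : a • ((3:ℂ) • (1:QM N) - (2:ℂ) • P - Q) - b • (1:QM N)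
        = a • ((3:ℂ) • (1:QM N) - (2:ℂ) • P - Q - (2:ℂ) • (1:QM N)) := by
      rw [hb]; module
    have h3 : a • ((3:ℂ) • (1:QM N) - (2:ℂ) • P - Q) - c • (1:QM N)
        = a • ((3:ℂ) • (1:QM N) - (2:ℂ) • P - Q - (3:ℂ) • (1:QM N)) := by
      rw [hc]; module
    rw [h1, h2, h3]
    simp only [smul_mul_assoc, mul_smul_comm, smul_smul]
    rw [hzero', smul_zero]
  have hmem : p.eval mu ∈ spectrum ℂ ((aeval (clWitnessMod N lam - (lam:ℂ) • clWitness N)) p) :=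
    spectrum.subset_polynomial_aeval _ p ⟨mu, hmu, rfl⟩
  rw [haev, spectrum.zero_eq] at hmem
  have hev : mu * (mu - a) * (mu - b) * (mu - c) = 0 := by
    have h0 := Set.mem_singleton_iff.mp hmem
    rw [hp] at h0
    simpa using h0
  rcases mul_eq_zero.mp hev with h | h
  · rcases mul_eq_zero.mp h with h | h
    · rcases mul_eq_zero.mp h with h | h
      · exact Or.inl h
      · exact Or.inr (Or.inl ((sub_eq_zero.mp h).trans (by rw [ha])))
    · exact Or.inr (Or.inr (Or.inl ((sub_eq_zero.mp h).trans (by rw [hb, ha]))))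
  · exact Or.inr (Or.inr (Or.inr ((sub_eq_zero.mp h).trans (by rw [hc, ha]))))

end
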